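/- For every integer d ≥ 2, (1/π)·∫_{−π}^{π} φ²·u_d(φ) dφ ≤ π⁴/(4(d+2)²). -/

import Mathlib

open Real

/-- The Jackson damping factor `ρ_{j,d}`. -/
noncomputable def jacksonDamp (d j : ℕ) : ℝ :=
  Real.sin ((j + 1) * (π / (d + 2))) / ((d + 2) * Real.sin (π / (d + 2)))
    + (1 - (j + 1) / (d + 2)) * Real.cos (j * (π / (d + 2)))

/-- The Jackson kernel `u_d(φ) = 1/2 + Σ_{j=1}^d ρ_{j,d} cos(jφ)`. -/
noncomputable def jacksonKernel (d : ℕ) (φ : ℝ) : ℝ :=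
  1 / 2 + ∑ j ∈ Finset.Icc 1 d, jacksonDamp d j * Real.cos (j * φ)

private lemma cos_sum_telescope (x α : ℝ) (N : ℕ) :
    Real.sin α * ∑ n ∈ Finset.range N, Real.cos (x + 2 * n * α)
      = (Real.sin (x + (2 * N - 1) * α) - Real.sin (x - α)) / 2 := by
  induction N with
  | zero =>
      rw [show x + (2 * ((0:ℕ):ℝ) - 1) * α = x - α by push_cast; ring]
      simp
  | succ N ih =>
      rw [Finset.sum_range_succ, mul_add, ih]
      push_cast
      rw [show x + (2 * ((N:ℝ) + 1) - 1) * α = (x + 2 * N * α) + α by ring,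
        show x + (2 * (N:ℝ) - 1) * α = (x + 2 * N * α) - α by ring,
        Real.sin_add, Real.sin_sub]
      ring

private lemma sin_alpha_pos (d : ℕ) : 0 < Real.sin (π / ((d:ℝ) + 2)) := by
  apply Real.sin_pos_of_pos_of_lt_pi
  · positivity
  · apply div_lt_self Real.pi_pos
    have : (0:ℝ) ≤ (d:ℝ) := Nat.cast_nonneg d
    linarith

private lemma sin_mul_sin_sum (d j : ℕ) (hj : j ≤ d) :
    ∑ n ∈ Finset.range (d + 1 - j),
        Real.sin (((n:ℝ) + 1) * (π / ((d:ℝ) + 2)))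
          * Real.sin (((n:ℝ) + (j:ℝ) + 1) * (π / ((d:ℝ) + 2)))
      = (((d:ℝ) + 2) / 2) * jacksonDamp d j := by
  set α := π / ((d:ℝ) + 2) with hα
  have hM : ((d:ℝ) + 2) ≠ 0 := by positivity
  have hs : Real.sin α ≠ 0 := (sin_alpha_pos d).ne'
  have hstep : ∀ n : ℕ,
      Real.sin (((n:ℝ) + 1) * α) * Real.sin (((n:ℝ) + (j:ℝ) + 1) * α)
        = (Real.cos ((j:ℝ) * α) - Real.cos (((j:ℝ) + 2) * α + 2 * (n:ℝ) * α)) / 2 := by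
    intro n
    have h1 := Real.cos_sub (((n:ℝ) + (j:ℝ) + 1) * α) (((n:ℝ) + 1) * α)
    have h2 := Real.cos_add (((n:ℝ) + (j:ℝ) + 1) * α) (((n:ℝ) + 1) * α)
    rw [show ((n:ℝ) + (j:ℝ) + 1) * α - ((n:ℝ) + 1) * α = (j:ℝ) * α by ring] at h1
    rw [show ((n:ℝ) + (j:ℝ) + 1) * α + ((n:ℝ) + 1) * α = ((j:ℝ) + 2) * α + 2 * (n:ℝ) * α by
      ring] at h2
    rw [h1, h2]
    ring
  rw [Finset.sum_congr rfl fun n _ => hstep n]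
  have hcard : ((d + 1 - j : ℕ) : ℝ) = (d:ℝ) + 1 - (j:ℝ) := by
    have h : j ≤ d + 1 := hj.trans (Nat.le_succ d)
    push_cast [Nat.cast_sub h]
    ring
  have htel := cos_sum_telescope (((j:ℝ) + 2) * α) α (d + 1 - j)
  rw [hcard] at htel
  have harg1 : ((j:ℝ) + 2) * α + (2 * ((d:ℝ) + 1 - (j:ℝ)) - 1) * α
      = 2 * π - ((j:ℝ) + 1) * α := by
    rw [hα]
    field_simp
    ring
  have harg2 : ((j:ℝ) + 2) * α - α = ((j:ℝ) + 1) * α := by ring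
  rw [harg1, harg2] at htel
  have h2π : Real.sin (2 * π - ((j:ℝ) + 1) * α) = -Real.sin (((j:ℝ) + 1) * α) := by
    rw [Real.sin_sub]
    simp [Real.sin_two_pi, Real.cos_two_pi]
  rw [h2π] at htel
  have hsum : ∑ n ∈ Finset.range (d + 1 - j), Real.cos (((j:ℝ) + 2) * α + 2 * (n:ℝ) * α)
      = -Real.sin (((j:ℝ) + 1) * α) / Real.sin α := by
    field_simp at htel ⊢
    linarith [htel]
  rw [← Finset.sum_div, Finset.sum_sub_distrib, hsum, Finset.sum_const, Finset.card_range,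
    nsmul_eq_mul, hcard]
  unfold jacksonDamp
  rw [← hα]
  field_simp
  ring

private lemma sq_sum_eq_double_sum (a : ℕ → ℝ) (φ : ℝ) (N : ℕ) :
    (∑ m ∈ Finset.range N, a m * Real.cos ((m:ℝ) * φ)) ^ 2
      + (∑ m ∈ Finset.range N, a m * Real.sin ((m:ℝ) * φ)) ^ 2
    = ∑ m ∈ Finset.range N, ∑ n ∈ Finset.range N,
        a m * a n * Real.cos ((m:ℝ) * φ - (n:ℝ) * φ) := by
  simp only [sq, Finset.sum_mul_sum]
  rw [← Finset.sum_add_distrib]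
  refine Finset.sum_congr rfl fun m _ => ?_
  rw [← Finset.sum_add_distrib]
  refine Finset.sum_congr rfl fun n _ => ?_
  rw [Real.cos_sub]
  ring

private lemma double_sum_regroup (a : ℕ → ℝ) (φ : ℝ) (N : ℕ) :
    ∑ m ∈ Finset.range (N + 1), ∑ n ∈ Finset.range (N + 1),
        a m * a n * Real.cos ((m:ℝ) * φ - (n:ℝ) * φ)
      = (∑ n ∈ Finset.range (N + 1), (a n) ^ 2)
        + ∑ j ∈ Finset.Icc 1 N,
            (2 * ∑ n ∈ Finset.range (N + 1 - j), a n * a (n + j)) * Real.cos ((j:ℝ) * φ) := by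
  induction N with
  | zero => simp [sq]
  | succ N ih =>
      set f : ℕ → ℕ → ℝ := fun m n => a m * a n * Real.cos ((m:ℝ) * φ - (n:ℝ) * φ) with hf
      have expand : ∀ g : ℕ → ℝ,
          ∑ m ∈ Finset.range (N + 2), g m = ∑ m ∈ Finset.range (N + 1), g m + g (N + 1) :=
        fun g => Finset.sum_range_succ g (N + 1)
      have lhs_eq : ∑ m ∈ Finset.range (N + 2), ∑ n ∈ Finset.range (N + 2), f m n
          = (∑ m ∈ Finset.range (N + 1), ∑ n ∈ Finset.range (N + 1), f m n)
            + (∑ n ∈ Finset.range (N + 1), (f (N + 1) n + f n (N + 1))) + f (N + 1) (N + 1) := by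
        rw [expand (fun m => ∑ n ∈ Finset.range (N + 2), f m n)]
        rw [Finset.sum_congr rfl fun m _ => expand (fun n => f m n)]
        rw [expand (fun n => f (N + 1) n), Finset.sum_add_distrib, Finset.sum_add_distrib]
        ring
      have hdiag : ∑ n ∈ Finset.range (N + 2), (a n) ^ 2
          = ∑ n ∈ Finset.range (N + 1), (a n) ^ 2 + (a (N + 1)) ^ 2 :=
        Finset.sum_range_succ _ _
      have hinner : ∀ j ∈ Finset.Icc 1 (N + 1),
          (2 * ∑ n ∈ Finset.range (N + 2 - j), a n * a (n + j)) * Real.cos ((j:ℝ) * φ)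
            = (2 * ∑ n ∈ Finset.range (N + 1 - j), a n * a (n + j)) * Real.cos ((j:ℝ) * φ)
              + 2 * a (N + 1 - j) * a (N + 1) * Real.cos ((j:ℝ) * φ) := by
        intro j hjmem
        rw [Finset.mem_Icc] at hjmem
        have h1 : N + 2 - j = (N + 1 - j) + 1 := by omega
        have h2 : (N + 1 - j) + j = N + 1 := by omega
        rw [h1, Finset.sum_range_succ, h2]
        ring
      have hoff : ∑ n ∈ Finset.range (N + 1), (f (N + 1) n + f n (N + 1))
          = ∑ j ∈ Finset.Icc 1 (N + 1),
              2 * a (N + 1 - j) * a (N + 1) * Real.cos ((j:ℝ) * φ) := by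
        refine Finset.sum_nbij' (fun n => N + 1 - n) (fun j => N + 1 - j) ?_ ?_ ?_ ?_ ?_
        · intro n hn
          rw [Finset.mem_range] at hn
          rw [Finset.mem_Icc]
          omega
        · intro j hj
          rw [Finset.mem_Icc] at hj
          rw [Finset.mem_range]
          omega
        · intro n hn
          rw [Finset.mem_range] at hn
          omega
        · intro j hj
          rw [Finset.mem_Icc] at hj
          omega
        · intro n hn
          rw [Finset.mem_range] at hn
          have h1 : N + 1 - (N + 1 - n) = n := by omega
          have h2 : ((N + 1 - n : ℕ) : ℝ) = ((N:ℝ) + 1) - (n:ℝ) := by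
            have h : n ≤ N + 1 := by omega
            push_cast [Nat.cast_sub h]
            ring
          rw [h1, h2, hf]
          simp only
          push_cast
          rw [show ((n:ℝ)) * φ - ((N:ℝ) + 1) * φ = -((((N:ℝ) + 1) - (n:ℝ)) * φ) by ring,
            Real.cos_neg,
            show ((N:ℝ) + 1) * φ - (n:ℝ) * φ = (((N:ℝ) + 1) - (n:ℝ)) * φ by ring]
          ring
      have hdiag2 : f (N + 1) (N + 1) = (a (N + 1)) ^ 2 := by
        rw [hf]; simp only [sub_self, Real.cos_zero]; ring
      have hlast : ∑ j ∈ Finset.Icc 1 (N + 1),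
          (2 * ∑ n ∈ Finset.range (N + 1 - j), a n * a (n + j)) * Real.cos ((j:ℝ) * φ)
          = ∑ j ∈ Finset.Icc 1 N,
              (2 * ∑ n ∈ Finset.range (N + 1 - j), a n * a (n + j)) * Real.cos ((j:ℝ) * φ) := by
        rw [Finset.sum_Icc_succ_top (by omega : 1 ≤ N + 1)]
        simp
      rw [lhs_eq, ih, hoff, hdiag, hdiag2, Finset.sum_congr rfl hinner,
        Finset.sum_add_distrib, hlast]
      ring

private lemma jacksonDamp_zero (d : ℕ) : jacksonDamp d 0 = 1 := by
  unfold jacksonDamp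
  have hs : Real.sin (π / ((d:ℝ) + 2)) ≠ 0 := (sin_alpha_pos d).ne'
  have hM : ((d:ℝ) + 2) ≠ 0 := by positivity
  push_cast
  norm_num
  field_simp
  ring

private lemma jacksonDamp_one (d : ℕ) : jacksonDamp d 1 = Real.cos (π / ((d:ℝ) + 2)) := by
  unfold jacksonDamp
  have hs : Real.sin (π / ((d:ℝ) + 2)) ≠ 0 := (sin_alpha_pos d).ne'
  have hM : ((d:ℝ) + 2) ≠ 0 := by positivity
  push_cast
  rw [show ((1:ℝ) + 1) * (π / ((d:ℝ) + 2)) = 2 * (π / ((d:ℝ) + 2)) by ring,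
    Real.sin_two_mul, one_mul]
  field_simp
  ring

private lemma kernel_eq_sq (d : ℕ) (φ : ℝ) :
    ((d:ℝ) + 2) * jacksonKernel d φ
      = (∑ m ∈ Finset.range (d + 1),
            Real.sin (((m:ℝ) + 1) * (π / ((d:ℝ) + 2))) * Real.cos ((m:ℝ) * φ)) ^ 2
        + (∑ m ∈ Finset.range (d + 1),
            Real.sin (((m:ℝ) + 1) * (π / ((d:ℝ) + 2))) * Real.sin ((m:ℝ) * φ)) ^ 2 := by
  set α := π / ((d:ℝ) + 2) with hα
  set a : ℕ → ℝ := fun m => Real.sin (((m:ℝ) + 1) * α) with ha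
  rw [sq_sum_eq_double_sum a φ (d + 1), double_sum_regroup a φ d]
  have hdiag : ∑ n ∈ Finset.range (d + 1), (a n) ^ 2 = (((d:ℝ) + 2) / 2) * 1 := by
    rw [← jacksonDamp_zero d, ← sin_mul_sin_sum d 0 (Nat.zero_le d)]
    simp only [Nat.sub_zero, Nat.cast_zero, add_zero]
    refine Finset.sum_congr rfl fun n _ => ?_
    rw [ha]
    ring
  have hoff : ∀ j ∈ Finset.Icc 1 d,
      (2 * ∑ n ∈ Finset.range (d + 1 - j), a n * a (n + j)) * Real.cos ((j:ℝ) * φ)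
        = (((d:ℝ) + 2) * jacksonDamp d j) * Real.cos ((j:ℝ) * φ) := by
    intro j hj
    rw [Finset.mem_Icc] at hj
    have hsum : ∑ n ∈ Finset.range (d + 1 - j), a n * a (n + j)
        = (((d:ℝ) + 2) / 2) * jacksonDamp d j := by
      rw [← sin_mul_sin_sum d j hj.2]
      refine Finset.sum_congr rfl fun n _ => ?_
      rw [ha]
      simp only
      push_cast
      rw [hα]
    rw [hsum]
    ring
  rw [Finset.sum_congr rfl hoff, hdiag]
  unfold jacksonKernel
  rw [mul_add, Finset.mul_sum]
  have hterm : ∀ j ∈ Finset.Icc 1 d,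
      ((d:ℝ) + 2) * (jacksonDamp d j * Real.cos ((j:ℝ) * φ))
        = (((d:ℝ) + 2) * jacksonDamp d j) * Real.cos ((j:ℝ) * φ) := fun j _ => by ring
  rw [Finset.sum_congr rfl hterm]
  ring

private lemma kernel_nonneg (d : ℕ) (φ : ℝ) : 0 ≤ jacksonKernel d φ := by
  have hM : (0:ℝ) < (d:ℝ) + 2 := by positivity
  have h := kernel_eq_sq d φ
  nlinarith [sq_nonneg (∑ m ∈ Finset.range (d + 1),
      Real.sin (((m:ℝ) + 1) * (π / ((d:ℝ) + 2))) * Real.cos ((m:ℝ) * φ)),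
    sq_nonneg (∑ m ∈ Finset.range (d + 1),
      Real.sin (((m:ℝ) + 1) * (π / ((d:ℝ) + 2))) * Real.sin ((m:ℝ) * φ))]

private lemma kernel_continuous (d : ℕ) : Continuous (jacksonKernel d) := by
  unfold jacksonKernel
  exact continuous_const.add (continuous_finset_sum _ fun j _ =>
    continuous_const.mul (Real.continuous_cos.comp (continuous_const.mul continuous_id)))

private lemma integral_cos_zero (c : ℝ) (hc : c ≠ 0) (h : Real.sin (c * π) = 0) :
    ∫ x in (-π)..π, Real.cos (c * x) = 0 := by
  rw [intervalIntegral.integral_comp_mul_left Real.cos hc, integral_cos]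
  rw [mul_neg, Real.sin_neg, h]
  simp

private lemma integral_kernel (d : ℕ) : ∫ φ in (-π)..π, jacksonKernel d φ = π := by
  unfold jacksonKernel
  rw [intervalIntegral.integral_add
    ((continuous_const (y := (1:ℝ)/2)).intervalIntegrable _ _)
    (Continuous.intervalIntegrable (by fun_prop) _ _)]
  rw [intervalIntegral.integral_finset_sum (fun j _ =>
    Continuous.intervalIntegrable (by fun_prop) _ _)]
  have hj : ∀ j ∈ Finset.Icc 1 d,
      ∫ φ in (-π)..π, jacksonDamp d j * Real.cos ((j:ℝ) * φ) = 0 := by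
    intro j hjm
    rw [Finset.mem_Icc] at hjm
    have hc : (j:ℝ) ≠ 0 := Nat.cast_ne_zero.mpr (by omega)
    rw [intervalIntegral.integral_const_mul,
      integral_cos_zero (j:ℝ) hc (Real.sin_nat_mul_pi j), mul_zero]
  rw [Finset.sum_congr rfl hj, Finset.sum_const_zero, add_zero,
    intervalIntegral.integral_const]
  rw [smul_eq_mul]
  ring

private lemma integral_cos_mul_kernel (d : ℕ) (hd : 1 ≤ d) :
    ∫ φ in (-π)..π, Real.cos φ * jacksonKernel d φ = π * jacksonDamp d 1 := by
  have hcont : ∀ c : ℝ, Continuous fun x : ℝ => Real.cos (c * x) := fun c =>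
    Real.continuous_cos.comp (continuous_const.mul continuous_id)
  unfold jacksonKernel
  have hsplit : (fun φ => Real.cos φ
        * (1 / 2 + ∑ j ∈ Finset.Icc 1 d, jacksonDamp d j * Real.cos ((j:ℝ) * φ)))
      = fun φ => Real.cos φ * (1 / 2)
          + ∑ j ∈ Finset.Icc 1 d, Real.cos φ * (jacksonDamp d j * Real.cos ((j:ℝ) * φ)) := by
    funext φ
    rw [mul_add, Finset.mul_sum]
  rw [hsplit]
  rw [intervalIntegral.integral_add (f := fun φ => Real.cos φ * (1 / 2))
    (g := fun φ => ∑ j ∈ Finset.Icc 1 d, Real.cos φ * (jacksonDamp d j * Real.cos ((j:ℝ) * φ)))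
    ((Real.continuous_cos.mul continuous_const).intervalIntegrable _ _)
    (Continuous.intervalIntegrable (continuous_finset_sum _ fun j _ =>
      Real.continuous_cos.mul (continuous_const.mul (hcont _))) _ _)]
  rw [intervalIntegral.integral_finset_sum
    (f := fun j φ => Real.cos φ * (jacksonDamp d j * Real.cos ((j:ℝ) * φ))) (fun j _ =>
    (Real.continuous_cos.mul (continuous_const.mul (hcont _))).intervalIntegrable _ _)]
  have h1 : ∫ φ in (-π)..π, Real.cos φ * (1 / 2) = 0 := by
    rw [intervalIntegral.integral_mul_const, integral_cos]
    simp
  have hterm : ∀ j ∈ Finset.Icc 1 d,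
      (∫ φ in (-π)..π, Real.cos φ * (jacksonDamp d j * Real.cos ((j:ℝ) * φ)))
        = if j = 1 then π * jacksonDamp d 1 else 0 := by
    intro j hjm
    rw [Finset.mem_Icc] at hjm
    have hptwise : ∀ x : ℝ, Real.cos x * (jacksonDamp d j * Real.cos ((j:ℝ) * x))
        = jacksonDamp d j
          * (Real.cos (((j:ℝ) + 1) * x) / 2 + Real.cos (((j:ℝ) - 1) * x) / 2) := by
      intro x
      have h1 := Real.cos_add ((j:ℝ) * x) x
      have h2 := Real.cos_sub ((j:ℝ) * x) x
      rw [show ((j:ℝ) + 1) * x = (j:ℝ) * x + x by ring,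
        show ((j:ℝ) - 1) * x = (j:ℝ) * x - x by ring, h1, h2]
      ring
    rw [intervalIntegral.integral_congr (fun x _ => hptwise x),
      intervalIntegral.integral_const_mul]
    rw [intervalIntegral.integral_add
      (((hcont ((j:ℝ) + 1)).div_const 2).intervalIntegrable _ _)
      (((hcont ((j:ℝ) - 1)).div_const 2).intervalIntegrable _ _)]
    have hA : ∫ x in (-π)..π, Real.cos (((j:ℝ) + 1) * x) / 2 = 0 := by
      rw [intervalIntegral.integral_div,
        integral_cos_zero ((j:ℝ) + 1) (by positivity)
          (by rw [show ((j:ℝ) + 1) = ((j + 1 : ℕ) : ℝ) by push_cast; ring]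
              exact Real.sin_nat_mul_pi (j + 1))]
      norm_num
    by_cases hj1 : j = 1
    · subst hj1
      have hB : ∀ x : ℝ, Real.cos ((((1:ℕ):ℝ) - 1) * x) / 2 = 1 / 2 := by
        intro x
        norm_num
      rw [hA, intervalIntegral.integral_congr (fun x _ => hB x),
        intervalIntegral.integral_const, if_pos rfl, smul_eq_mul]
      ring
    · have hj2 : 2 ≤ j := by omega
      have hB : ∫ x in (-π)..π, Real.cos (((j:ℝ) - 1) * x) / 2 = 0 := by
        have hjR : (2:ℝ) ≤ (j:ℝ) := by exact_mod_cast hj2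
        rw [intervalIntegral.integral_div,
          integral_cos_zero ((j:ℝ) - 1) (by linarith)
            (by rw [show ((j:ℝ) - 1) = ((j - 1 : ℕ) : ℝ) by
                  push_cast [Nat.cast_sub (by omega : 1 ≤ j)]; ring]
                exact Real.sin_nat_mul_pi (j - 1))]
        norm_num
      rw [hA, hB, if_neg hj1]
      ring
  rw [Finset.sum_congr rfl hterm, Finset.sum_ite_eq' (Finset.Icc 1 d) 1
    (fun _ => π * jacksonDamp d 1)]
  rw [if_pos (Finset.mem_Icc.mpr ⟨le_refl 1, hd⟩), h1, zero_add]

/-- `(1/π)·∫_{−π}^{π} φ²·u_d(φ) dφ ≤ π⁴/(4(d+2)²)` for `d ≥ 2`. -/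
theorem jacksonKernel_second_moment (d : ℕ) (hd : 2 ≤ d) :
    (1 / π) * ∫ φ in (-π)..π, φ ^ 2 * jacksonKernel d φ ≤ π ^ 4 / (4 * (d + 2) ^ 2) := by
  have hπ := Real.pi_pos
  have hKc : Continuous (jacksonKernel d) := kernel_continuous d
  have hint1 : IntervalIntegrable (fun φ => φ ^ 2 * jacksonKernel d φ)
      MeasureTheory.volume (-π) π := ((continuous_pow 2).mul hKc).intervalIntegrable _ _
  have hint2 : IntervalIntegrable (fun φ => (2 - 2 * Real.cos φ) * jacksonKernel d φ)
      MeasureTheory.volume (-π) π :=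
    ((continuous_const.sub (continuous_const.mul Real.continuous_cos)).mul
      hKc).intervalIntegrable _ _
  have h0 : 0 ≤ ∫ φ in (-π)..π,
      (π ^ 2 / 4 * ((2 - 2 * Real.cos φ) * jacksonKernel d φ)
        - φ ^ 2 * jacksonKernel d φ) := by
    apply intervalIntegral.integral_nonneg (by linarith)
    intro x hx
    have hxabs : |x| ≤ π := abs_le.mpr ⟨hx.1, hx.2⟩
    have hcos := Real.cos_le_one_sub_mul_cos_sq hxabs
    have hKx := kernel_nonneg d x
    have key : π ^ 2 / 4 * (2 - 2 * (1 - 2 / π ^ 2 * x ^ 2)) = x ^ 2 := by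
      field_simp
      ring
    have hmul := mul_le_mul_of_nonneg_left
      (by linarith : 2 - 2 * (1 - 2 / π ^ 2 * x ^ 2) ≤ 2 - 2 * Real.cos x)
      (by positivity : (0:ℝ) ≤ π ^ 2 / 4)
    have hfac : 0 ≤ π ^ 2 / 4 * (2 - 2 * Real.cos x) - x ^ 2 := by linarith
    nlinarith [mul_nonneg hfac hKx]
  have hsub : (∫ φ in (-π)..π,
      (π ^ 2 / 4 * ((2 - 2 * Real.cos φ) * jacksonKernel d φ)
        - φ ^ 2 * jacksonKernel d φ))
      = π ^ 2 / 4 * (∫ φ in (-π)..π, (2 - 2 * Real.cos φ) * jacksonKernel d φ)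
        - ∫ φ in (-π)..π, φ ^ 2 * jacksonKernel d φ := by
    rw [intervalIntegral.integral_sub (hint2.const_mul _) hint1,
      intervalIntegral.integral_const_mul]
  have hI2 : ∫ φ in (-π)..π, (2 - 2 * Real.cos φ) * jacksonKernel d φ
      = 2 * π - 2 * π * Real.cos (π / ((d:ℝ) + 2)) := by
    have hexp : (fun φ => (2 - 2 * Real.cos φ) * jacksonKernel d φ)
        = fun φ => 2 * jacksonKernel d φ - 2 * (Real.cos φ * jacksonKernel d φ) := by
      funext φ
      ring
    rw [hexp, intervalIntegral.integral_sub (f := fun φ => 2 * jacksonKernel d φ)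
      (g := fun φ => 2 * (Real.cos φ * jacksonKernel d φ))
      ((hKc.intervalIntegrable _ _).const_mul 2)
      (((Real.continuous_cos.mul hKc : Continuous fun φ => Real.cos φ * jacksonKernel d φ).intervalIntegrable _ _).const_mul 2),
      intervalIntegral.integral_const_mul, intervalIntegral.integral_const_mul,
      integral_kernel d, integral_cos_mul_kernel d (by omega), jacksonDamp_one d]
    ring
  have hle : (∫ φ in (-π)..π, φ ^ 2 * jacksonKernel d φ)
      ≤ π ^ 2 / 4 * (2 * π - 2 * π * Real.cos (π / ((d:ℝ) + 2))) := by
    rw [← hI2]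
    linarith [h0, hsub.symm.le, hsub.le]
  have hcosb : 1 - Real.cos (π / ((d:ℝ) + 2)) ≤ (π / ((d:ℝ) + 2)) ^ 2 / 2 := by
    have := Real.one_sub_sq_div_two_le_cos (x := π / ((d:ℝ) + 2))
    linarith
  have hMpos : (0:ℝ) < (d:ℝ) + 2 := by positivity
  calc (1 / π) * ∫ φ in (-π)..π, φ ^ 2 * jacksonKernel d φ
      ≤ (1 / π) * (π ^ 2 / 4 * (2 * π - 2 * π * Real.cos (π / ((d:ℝ) + 2)))) :=
        mul_le_mul_of_nonneg_left hle (by positivity)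
    _ = π ^ 2 / 2 * (1 - Real.cos (π / ((d:ℝ) + 2))) := by
        field_simp
        ring
    _ ≤ π ^ 2 / 2 * ((π / ((d:ℝ) + 2)) ^ 2 / 2) :=
        mul_le_mul_of_nonneg_left hcosb (by positivity)
    _ = π ^ 4 / (4 * ((d:ℝ) + 2) ^ 2) := by
        field_simp
        ring
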